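/- Place n ≥ 3 points p₀, …, p_{n−1} at the vertices of a regular n-gon inscribed in a circle, i.e., p_k = (cos(2πk/n), sin(2πk/n)). Then for any vertex p_i and any two distinct other vertices p_j, p_k, the angle at p_i in the configuration (angle between segments p_i p_j and p_i p_k) is at least π/n. -/

import Mathlib

open Real EuclideanGeometry

private lemma aux_inner (A B C : ℝ) :
    (Real.cos A - Real.cos B) * (Real.cos C - Real.cos B)
      + (Real.sin A - Real.sin B) * (Real.sin C - Real.sin B)
    = 4 * Real.sin ((A - B) / 2) * Real.sin ((C - B) / 2) * Real.cos ((A - C) / 2) := by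
  rw [Real.cos_sub_cos, Real.cos_sub_cos, Real.sin_sub_sin, Real.sin_sub_sin]
  have h : (A - C) / 2 = (A + B) / 2 - (C + B) / 2 := by ring
  rw [h, Real.cos_sub]
  ring

private lemma aux_normsq (A B : ℝ) :
    (Real.cos A - Real.cos B) ^ 2 + (Real.sin A - Real.sin B) ^ 2
      = (2 * Real.sin ((A - B) / 2)) ^ 2 := by
  rw [Real.cos_sub_cos, Real.sin_sub_sin]
  linear_combination (4 * Real.sin ((A - B) / 2) ^ 2) * Real.sin_sq_add_cos_sq ((A + B) / 2)

private lemma aux_sin_ne_zero (t : ℝ) (h1 : 0 < |t|) (h2 : |t| < π) : Real.sin t ≠ 0 := by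
  rcases lt_trichotomy t 0 with h | h | h
  · rw [abs_of_neg h] at h2
    have : 0 < Real.sin (-t) := Real.sin_pos_of_pos_of_lt_pi (by linarith) h2
    rw [Real.sin_neg] at this
    intro h0; rw [h0] at this; simp at this
  · simp [h] at h1
  · rw [abs_of_pos h] at h2
    exact ne_of_gt (Real.sin_pos_of_pos_of_lt_pi h h2)

private lemma aux_cos_bound (n : ℕ) (hn : 3 ≤ n) (d : ℝ) (h1 : 1 ≤ |d|)
    (h2 : |d| ≤ (n : ℝ) - 1) : |Real.cos (π * d / n)| ≤ Real.cos (π / n) := by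
  have hn0 : (0 : ℝ) < n := by positivity
  have hpi := Real.pi_pos
  have hc : Real.cos (π * d / n) = Real.cos (π * |d| / n) := by
    rcases abs_cases d with ⟨h, _⟩ | ⟨h, _⟩
    · rw [h]
    · rw [h]; rw [show π * -d / n = -(π * d / n) by ring, Real.cos_neg]
  rw [hc]
  set t := π * |d| / n with ht
  have hd0 : 0 < π / n := by positivity
  have ht1 : π / n ≤ t := by
    rw [ht, div_le_div_iff₀ hn0 hn0]
    nlinarith [mul_nonneg (mul_nonneg (sub_nonneg.mpr h1) hpi.le) hn0.le]
  have ht2 : t ≤ π - π / n := by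
    have hsum : π * |d| / n + π / n ≤ π := by
      rw [← add_div, div_le_iff₀ hn0]
      nlinarith [mul_nonneg hpi.le (sub_nonneg.mpr h2)]
    rw [ht]; linarith
  have h0t : 0 ≤ t := le_trans (by positivity) ht1
  rw [abs_le]
  constructor
  · have : Real.cos (π - t) ≤ Real.cos (π / n) := by
      apply Real.cos_le_cos_of_nonneg_of_le_pi (by positivity) (by linarith) (by linarith)
    rw [Real.cos_pi_sub] at this; linarith
  · exact Real.cos_le_cos_of_nonneg_of_le_pi (by positivity) (by linarith) ht1

/-- Place `n ≥ 3` points at the vertices of a regular `n`-gon inscribed in the unit circle,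
`p k = (cos (2πk/n), sin (2πk/n))`.  Then for any vertex `p i` and any two distinct other
vertices `p j`, `p k`, the angle `∠ (p j) (p i) (p k)` is at least `π/n`. -/
theorem regular_ngon_angular_resolution (n : ℕ) (hn : 3 ≤ n)
    (p : ℕ → EuclideanSpace ℝ (Fin 2))
    (hp : ∀ k : ℕ, p k = (EuclideanSpace.equiv (Fin 2) ℝ).symm
      ![Real.cos (2 * π * k / n), Real.sin (2 * π * k / n)])
    (i j k : ℕ) (hi : i < n) (hj : j < n) (hk : k < n)
    (hji : j ≠ i) (hki : k ≠ i) (hjk : j ≠ k) :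
    π / n ≤ ∠ (p j) (p i) (p k) := by
  have hn0 : (0 : ℝ) < n := by positivity
  have hpi := Real.pi_pos
  set A : ℝ := 2 * π * j / n with hA
  set B : ℝ := 2 * π * i / n with hB
  set C : ℝ := 2 * π * k / n with hC
  set x : ℝ := π * ((j : ℝ) - i) / n with hx
  set y : ℝ := π * ((k : ℝ) - i) / n with hy
  set z : ℝ := π * ((j : ℝ) - k) / n with hz
  have hxAB : (A - B) / 2 = x := by rw [hA, hB, hx]; ring
  have hyCB : (C - B) / 2 = y := by rw [hB, hC, hy]; ring
  have hzAC : (A - C) / 2 = z := by rw [hA, hC, hz]; ring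
  -- components
  have hcomp : ∀ m : ℕ, (p m) 0 = Real.cos (2 * π * m / n) ∧ (p m) 1 = Real.sin (2 * π * m / n) := by
    intro m
    rw [hp m]
    constructor <;> simp
  -- abs facts
  have habs : ∀ a b : ℕ, a < n → b < n → a ≠ b →
      1 ≤ |(a : ℝ) - b| ∧ |(a : ℝ) - b| ≤ (n : ℝ) - 1 := by
    intro a b ha hb hab
    constructor
    · rcases lt_or_gt_of_ne hab with h | h
      · have hr : (a : ℝ) + 1 ≤ b := by exact_mod_cast h
        rw [abs_sub_comm, abs_of_pos (by linarith)]
        linarith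
      · have hr : (b : ℝ) + 1 ≤ a := by exact_mod_cast h
        rw [abs_of_pos (by linarith)]
        linarith
    · rw [abs_sub_le_iff]
      have h1 : (a : ℝ) ≤ n - 1 := by
        have : (a : ℝ) + 1 ≤ n := by exact_mod_cast ha
        linarith
      have h2 : (b : ℝ) ≤ n - 1 := by
        have : (b : ℝ) + 1 ≤ n := by exact_mod_cast hb
        linarith
      constructor <;> [nlinarith [Nat.cast_nonneg (α := ℝ) b]; nlinarith [Nat.cast_nonneg (α := ℝ) a]]
  have hsinx : Real.sin x ≠ 0 := by
    obtain ⟨h1, h2⟩ := habs j i hj hi hji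
    apply aux_sin_ne_zero
    · rw [hx, abs_div, abs_mul, abs_of_pos hpi, Nat.abs_cast]
      have : (0:ℝ) < |(j : ℝ) - i| := by linarith
      positivity
    · rw [hx, abs_div, abs_mul, abs_of_pos hpi, Nat.abs_cast, div_lt_iff₀ hn0]
      nlinarith
  have hsiny : Real.sin y ≠ 0 := by
    obtain ⟨h1, h2⟩ := habs k i hk hi hki
    apply aux_sin_ne_zero
    · rw [hy, abs_div, abs_mul, abs_of_pos hpi, Nat.abs_cast]
      have : (0:ℝ) < |(k : ℝ) - i| := by linarith
      positivity
    · rw [hy, abs_div, abs_mul, abs_of_pos hpi, Nat.abs_cast, div_lt_iff₀ hn0]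
      nlinarith
  -- inner product and norms
  have hinner : (inner ℝ (p j -ᵥ p i) (p k -ᵥ p i) : ℝ)
      = 4 * Real.sin x * Real.sin y * Real.cos z := by
    rw [PiLp.inner_apply, Fin.sum_univ_two]
    simp only [vsub_eq_sub, PiLp.sub_apply, RCLike.inner_apply, conj_trivial]
    rw [(hcomp j).1, (hcomp j).2, (hcomp i).1, (hcomp i).2, (hcomp k).1, (hcomp k).2]
    rw [← hxAB, ← hyCB, ← hzAC, ← aux_inner A B C]
    rw [hA, hB, hC]; ring
  have hnorm : ∀ a b : ℕ, ‖p a -ᵥ p b‖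
      = 2 * |Real.sin ((2 * π * a / n - 2 * π * b / n) / 2)| := by
    intro a b
    rw [show (p a -ᵥ p b : EuclideanSpace ℝ (Fin 2)) = p a - p b from rfl]
    rw [EuclideanSpace.norm_eq, Fin.sum_univ_two]
    simp only [PiLp.sub_apply, Real.norm_eq_abs, sq_abs]
    rw [(hcomp a).1, (hcomp a).2, (hcomp b).1, (hcomp b).2]
    rw [aux_normsq (2 * π * a / n) (2 * π * b / n)]
    rw [Real.sqrt_sq_eq_abs, abs_mul]
    norm_num
  have hnu : ‖p j -ᵥ p i‖ = 2 * |Real.sin x| := by rw [hnorm j i, ← hA, ← hB, hxAB]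
  have hnv : ‖p k -ᵥ p i‖ = 2 * |Real.sin y| := by rw [hnorm k i, ← hC, ← hB, hyCB]
  -- cosine of the angle
  have hcos : Real.cos (∠ (p j) (p i) (p k))
      = 4 * Real.sin x * Real.sin y * Real.cos z / (2 * |Real.sin x| * (2 * |Real.sin y|)) := by
    rw [EuclideanGeometry.angle, InnerProductGeometry.cos_angle, hinner, hnu, hnv]
  have hQ : Real.cos (∠ (p j) (p i) (p k)) ≤ |Real.cos z| := by
    rw [hcos]
    calc 4 * Real.sin x * Real.sin y * Real.cos z / (2 * |Real.sin x| * (2 * |Real.sin y|))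
        ≤ |4 * Real.sin x * Real.sin y * Real.cos z / (2 * |Real.sin x| * (2 * |Real.sin y|))| :=
          le_abs_self _
      _ = |Real.cos z| := by
          have h1 : (0:ℝ) < |Real.sin x| := abs_pos.mpr hsinx
          have h2 : (0:ℝ) < |Real.sin y| := abs_pos.mpr hsiny
          have hden : (0:ℝ) < 2 * |Real.sin x| * (2 * |Real.sin y|) := by positivity
          rw [abs_div, abs_of_pos hden]
          have hnum : |4 * Real.sin x * Real.sin y * Real.cos z|
              = 2 * |Real.sin x| * (2 * |Real.sin y|) * |Real.cos z| := by
            rw [abs_mul, abs_mul, abs_mul, show |(4:ℝ)| = 4 by norm_num]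
            ring
          rw [hnum, mul_comm, mul_div_assoc, div_self hden.ne', mul_one]
  -- bound |cos z| ≤ cos (π/n)
  obtain ⟨h1, h2⟩ := habs j k hj hk hjk
  have hbound : |Real.cos z| ≤ Real.cos (π / n) := by
    rw [hz]
    exact aux_cos_bound n hn ((j : ℝ) - k) h1 h2
  have hcosle : Real.cos (∠ (p j) (p i) (p k)) ≤ Real.cos (π / n) := le_trans hQ hbound
  -- conclude
  by_contra hlt
  push_neg at hlt
  have hmem1 : ∠ (p j) (p i) (p k) ∈ Set.Icc 0 π :=
    ⟨EuclideanGeometry.angle_nonneg _ _ _, EuclideanGeometry.angle_le_pi _ _ _⟩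
  have hmem2 : π / n ∈ Set.Icc 0 π := by
    constructor
    · positivity
    · rw [div_le_iff₀ hn0]; nlinarith
  have := Real.strictAntiOn_cos hmem1 hmem2 hlt
  linarith
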